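/- Let C be a local ring which is a unique factorization domain, let B be a discrete valuation ring, and let φ : C → B be a local ring homomorphism (φ maps the maximal ideal of C into the maximal ideal of B). If c ∈ C is an element such that φ(c) is a uniformizer of B (i.e., φ(c) has valuation 1), then c is an irreducible, hence prime, element of C. -/

import Mathlib

/-- If `C` is a local UFD, `B` a discrete valuation ring, `φ : C → B` a local ring
homomorphism, and `c : C` maps to a uniformizer of `B` (a generator of the maximal
ideal, i.e. an element of valuation 1), then `c` is irreducible, hence prime, in `C`. -/
theorem irreducible_and_prime_of_map_uniformizer
    {C B : Type} [CommRing C] [IsLocalRing C] [IsDomain C] [UniqueFactorizationMonoid C]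
    [CommRing B] [IsDomain B] [IsDiscreteValuationRing B]
    (φ : C →+* B) (hφ : IsLocalHom φ) (c : C)
    (hc : IsLocalRing.maximalIdeal B = Ideal.span {φ c}) :
    Irreducible c ∧ Prime c := by
  have hmem : φ c ∈ IsLocalRing.maximalIdeal B := by
    rw [hc]; exact Ideal.mem_span_singleton_self _
  have hnu : ¬ IsUnit (φ c) := hmem
  have hne : φ c ≠ 0 := by
    intro h
    exact IsDiscreteValuationRing.not_a_field B (by rw [hc, h, Ideal.span_singleton_eq_bot])
  have hcnu : ¬ IsUnit c := fun h => hnu (h.map φ)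
  have hirr : Irreducible c := by
    refine ⟨hcnu, fun a b hab => ?_⟩
    by_contra h
    push_neg at h
    obtain ⟨ha, hb⟩ := h
    have haM : φ a ∈ IsLocalRing.maximalIdeal B := fun hu => ha (hφ.1 _ hu)
    have hbM : φ b ∈ IsLocalRing.maximalIdeal B := fun hu => hb (hφ.1 _ hu)
    rw [hc, Ideal.mem_span_singleton] at haM hbM
    obtain ⟨x, hx⟩ := haM
    obtain ⟨y, hy⟩ := hbM
    have : φ c = φ c * (φ c * (x * y)) := by
      conv_lhs => rw [hab]
      rw [map_mul, hx, hy]; ring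
    have h1 : (1 : B) = φ c * (x * y) :=
      mul_left_cancel₀ hne (by rw [mul_one, ← this])
    exact hnu (IsUnit.of_mul_eq_one _ h1.symm)
  exact ⟨hirr, UniqueFactorizationMonoid.irreducible_iff_prime.mp hirr⟩
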